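/- Let c, p : [0,∞) → ℝ be differentiable and satisfy c' = k1(e0 − c)(s0 − c − p) − k1·K_M·c and p' = k2·c with c(0) = 0, p(0) = 0, where k1, k−1, k2, e0, s0 > 0 and K_M = (k−1+k2)/k1. Assume 0 ≤ c(t) ≤ λ and 0 ≤ p(t) ≤ s0 for all t ≥ 0, where λ = ½(e0+K_M+s0) − ½√((e0+K_M+s0)² − 4e0·s0). Then with h⁻(p) = ½(e0+K_M+s0−p) − ½√((e0+K_M+s0−p)² − 4e0(s0−p)), η = e0/K_M and κ = k−1/k2, one has for all t ≥ 0: |c(t) − h⁻(p(t))| ≤ λ·exp(−k1(e0 + K_M − λ)t/2) + (η·λ/((1+η)(1+κ)))·(K_M/(e0 − λ + K_M)). -/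

import Mathlib

open Set

private lemma le_sqrt_of_sq_le' {x y : ℝ} (h : x ^ 2 ≤ y) : x ≤ Real.sqrt y :=
  le_trans (le_abs_self x) (by rw [← Real.sqrt_sq_eq_abs]; exact Real.sqrt_le_sqrt h)

private lemma lt_sqrt_of_sq_lt' {x y : ℝ} (h : x ^ 2 < y) : x < Real.sqrt y := by
  rcases le_or_gt x 0 with hx | hx
  · exact lt_of_le_of_lt hx (Real.sqrt_pos.2 (lt_of_le_of_lt (sq_nonneg x) h))
  · calc x = Real.sqrt (x ^ 2) := (Real.sqrt_sq hx.le).symm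
      _ < Real.sqrt y := Real.sqrt_lt_sqrt (sq_nonneg x) h

set_option maxHeartbeats 2000000 in
theorem tQSSA_enslavement_bound (k1 km1 k2 e0 s0 KM lam η κ : ℝ)
    (hk1 : 0 < k1) (hkm1 : 0 < km1) (hk2 : 0 < k2) (he0 : 0 < e0) (hs0 : 0 < s0)
    (hKM : KM = (km1 + k2) / k1)
    (hlam : lam = (e0 + KM + s0) / 2 - Real.sqrt ((e0 + KM + s0) ^ 2 - 4 * e0 * s0) / 2)
    (hη : η = e0 / KM) (hκ : κ = km1 / k2)
    (c p : ℝ → ℝ)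
    (hc : ∀ t : ℝ, 0 ≤ t →
      HasDerivAt c (k1 * (e0 - c t) * (s0 - c t - p t) - k1 * KM * c t) t)
    (hp : ∀ t : ℝ, 0 ≤ t → HasDerivAt p (k2 * c t) t)
    (hc0 : c 0 = 0) (hp0 : p 0 = 0)
    (hcb : ∀ t : ℝ, 0 ≤ t → 0 ≤ c t ∧ c t ≤ lam)
    (hpb : ∀ t : ℝ, 0 ≤ t → 0 ≤ p t ∧ p t ≤ s0) :
    ∀ t : ℝ, 0 ≤ t →
      |c t - ((e0 + KM + s0 - p t) / 2
          - Real.sqrt ((e0 + KM + s0 - p t) ^ 2 - 4 * e0 * (s0 - p t)) / 2)| ≤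
        lam * Real.exp (-(k1 * (e0 + KM - lam) * t) / 2)
          + (η * lam / ((1 + η) * (1 + κ))) * (KM / (e0 - lam + KM)) := by
  have hKMpos : 0 < KM := by rw [hKM]; positivity
  have hKMk : k1 * KM = km1 + k2 := by rw [hKM]; field_simp [hk1.ne']
  -- basic facts about lam
  have hD0pos : 0 < (e0 + KM + s0) ^ 2 - 4 * e0 * s0 := by
    linarith [sq_nonneg (s0 + KM - e0), mul_pos he0 hKMpos]
  have hlam_pos : 0 < lam := by
    rw [hlam]
    have h1 : Real.sqrt ((e0 + KM + s0) ^ 2 - 4 * e0 * s0) < e0 + KM + s0 := by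
      have := Real.sqrt_lt' (x := (e0 + KM + s0) ^ 2 - 4 * e0 * s0)
        (y := e0 + KM + s0) (by positivity)
      exact this.2 (by linarith [mul_pos he0 hs0])
    linarith
  have hlam_lt : lam < e0 := by
    have h1 : KM + s0 - e0 < Real.sqrt ((e0 + KM + s0) ^ 2 - 4 * e0 * s0) :=
      lt_sqrt_of_sq_lt' (by linarith [mul_pos he0 hKMpos])
    rw [hlam]; linarith
  -- the constants α and β
  set α : ℝ := k1 * (e0 + KM - lam) with hαdef
  set β : ℝ := k2 * lam * e0 / (e0 + KM) with hβdef
  have hαpos : 0 < α := by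
    have : 0 < e0 + KM - lam := by linarith
    positivity
  have hβpos : 0 < β := by positivity
  have hβα : β < α * lam := by
    have h1 : β < k2 * lam := by
      rw [hβdef, div_lt_iff₀ (by positivity)]
      linarith [mul_pos (mul_pos hk2 hlam_pos) hKMpos]
    have h2 : k2 * lam ≤ k1 * KM * lam :=
      mul_le_mul_of_nonneg_right (by linarith) hlam_pos.le
    have h3 : k1 * KM * lam < α * lam := by
      rw [hαdef]
      exact mul_lt_mul_of_pos_right
        (mul_lt_mul_of_pos_left (by linarith) hk1) hlam_pos
    linarith
  have hβαlam : β / α < lam := (div_lt_iff₀ hαpos).2 (by linarith [hβα])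
  clear_value α β
  -- the deviation function u and its derivative candidate
  set u : ℝ → ℝ := fun t => c t - ((e0 + KM + s0 - p t) / 2
      - Real.sqrt ((e0 + KM + s0 - p t) ^ 2 - 4 * e0 * (s0 - p t)) / 2) with hudef
  set ud : ℝ → ℝ := fun t => (k1 * (e0 - c t) * (s0 - c t - p t) - k1 * KM * c t) -
      ((-1) / 2 - (2 * (e0 + KM + s0 - p t) * (-1) - 4 * e0 * (-1)) /
        (2 * Real.sqrt ((e0 + KM + s0 - p t) ^ 2 - 4 * e0 * (s0 - p t))) / 2) * (k2 * c t)
    with huddef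
  -- discriminant positivity along the trajectory
  have hDpos : ∀ t : ℝ, 0 ≤ t →
      0 < (e0 + KM + s0 - p t) ^ 2 - 4 * e0 * (s0 - p t) := by
    intro t ht
    obtain ⟨hp0t, hps0⟩ := hpb t ht
    linarith [sq_nonneg (s0 - p t + KM - e0), mul_pos he0 hKMpos]
  -- u has derivative ud at every t ≥ 0
  have hud : ∀ t : ℝ, 0 ≤ t → HasDerivAt u (ud t) t := by
    intro t ht
    have hDt := hDpos t ht
    have h1 : HasDerivAt (fun y : ℝ => e0 + KM + s0 - y) (-1) (p t) := by
      simpa using (hasDerivAt_id (p t)).const_sub (e0 + KM + s0)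
    have h2 : HasDerivAt (fun y : ℝ => (e0 + KM + s0 - y) ^ 2)
        (2 * (e0 + KM + s0 - p t) * (-1)) (p t) := by
      simpa using h1.fun_pow 2
    have h3 : HasDerivAt (fun y : ℝ => 4 * e0 * (s0 - y)) (4 * e0 * (-1)) (p t) := by
      simpa using ((hasDerivAt_id (p t)).const_sub s0).const_mul (4 * e0)
    have hD : HasDerivAt (fun y : ℝ => (e0 + KM + s0 - y) ^ 2 - 4 * e0 * (s0 - y))
        (2 * (e0 + KM + s0 - p t) * (-1) - 4 * e0 * (-1)) (p t) := h2.sub h3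
    have hsq : HasDerivAt
        (fun y : ℝ => Real.sqrt ((e0 + KM + s0 - y) ^ 2 - 4 * e0 * (s0 - y)))
        ((2 * (e0 + KM + s0 - p t) * (-1) - 4 * e0 * (-1)) /
          (2 * Real.sqrt ((e0 + KM + s0 - p t) ^ 2 - 4 * e0 * (s0 - p t)))) (p t) :=
      hD.sqrt hDt.ne'
    have hψ : HasDerivAt (fun y : ℝ => (e0 + KM + s0 - y) / 2
        - Real.sqrt ((e0 + KM + s0 - y) ^ 2 - 4 * e0 * (s0 - y)) / 2)
        ((-1) / 2 - (2 * (e0 + KM + s0 - p t) * (-1) - 4 * e0 * (-1)) /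
          (2 * Real.sqrt ((e0 + KM + s0 - p t) ^ 2 - 4 * e0 * (s0 - p t))) / 2) (p t) :=
      (h1.div_const 2).sub (hsq.div_const 2)
    have hcomp := hψ.comp t (hp t ht)
    have := (hc t ht).fun_sub hcomp
    simpa [hudef, huddef, Function.comp, mul_comm] using this
  -- pointwise differential inequalities
  have hbound : ∀ t : ℝ, 0 ≤ t →
      (0 ≤ u t → ud t ≤ -α * u t + β) ∧ (u t ≤ 0 → -ud t ≤ α * u t + β) := by
    intro t ht
    obtain ⟨hc0t, hclam⟩ := hcb t ht
    obtain ⟨hp0t, hps0⟩ := hpb t ht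
    have hDt := hDpos t ht
    set x := p t with hxdef
    set ct := c t with hctdef
    set R := Real.sqrt ((e0 + KM + s0 - x) ^ 2 - 4 * e0 * (s0 - x)) with hRdef
    have hRpos : 0 < R := Real.sqrt_pos.2 hDt
    have hR2 : R ^ 2 = (e0 + KM + s0 - x) ^ 2 - 4 * e0 * (s0 - x) :=
      Real.sq_sqrt hDt.le
    have hR1 : e0 + KM - (s0 - x) ≤ R := le_sqrt_of_sq_le'
      (by linarith [mul_nonneg hKMpos.le (sub_nonneg.2 hps0)])
    have hR3 : (s0 - x) + KM - e0 ≤ R := le_sqrt_of_sq_le'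
      (by linarith [mul_pos he0 hKMpos])
    have hRle : R ≤ e0 + KM + (s0 - x) := by
      rw [hRdef, show e0 + KM + (s0 - x) = Real.sqrt ((e0 + KM + (s0 - x)) ^ 2) by
        rw [Real.sqrt_sq (by linarith)]]
      exact Real.sqrt_le_sqrt (by linarith [mul_nonneg he0.le (sub_nonneg.2 hps0)])
    set hm : ℝ := (e0 + KM + s0 - x) / 2 - R / 2 with hmdef
    set hq : ℝ := (e0 + KM + s0 - x) / 2 + R / 2 with hqdef
    have hm0 : 0 ≤ hm := by rw [hmdef]; linarith
    have hme0 : hm ≤ e0 := by rw [hmdef]; linarith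
    have hq_lb : e0 + KM ≤ hq := by rw [hqdef]; linarith
    have hprod : hm * hq = e0 * (s0 - x) := by
      rw [hmdef, hqdef]; linear_combination (-1/4 : ℝ) * hR2
    have hut : u t = ct - hm := rfl
    have hsum : hm + hq = e0 + KM + s0 - x := by rw [hmdef, hqdef]; ring
    have hRalt : R = e0 + KM + (s0 - x) - 2 * hm := by rw [hmdef]; ring
    -- rewrite ud t
    have hudt : ud t = k1 * ((ct - hm) * (ct - hq)) + ((e0 - hm) / R) * (k2 * ct) := by
      rw [huddef]
      simp only []
      have e1 : k1 * (e0 - ct) * (s0 - ct - x) - k1 * KM * ct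
          = k1 * ((ct - hm) * (ct - hq)) := by
        linear_combination (-k1) * hprod + (k1 * ct) * hsum
      have e2 : ((-1) / 2 - (2 * (e0 + KM + s0 - x) * (-1) - 4 * e0 * (-1)) /
          (2 * R) / 2) = -((e0 - hm) / R) := by
        rw [hmdef]; field_simp; ring
      rw [e1, e2]; ring
    clear_value x ct R hm hq
    -- key linear estimates
    have hA : k1 * (ct - hq) ≤ -α := by
      have h1 : ct - hq ≤ lam - (e0 + KM) := by linarith
      have := mul_le_mul_of_nonneg_left h1 hk1.le
      rw [hαdef]; linarith
    have hdivpos : 0 ≤ (e0 - hm) / R := div_nonneg (by linarith) hRpos.le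
    have hdiv : (e0 - hm) / R ≤ e0 / (e0 + KM) := by
      rw [div_le_div_iff₀ hRpos (by positivity)]
      have key : hm * (e0 - KM) ≤ hm * hq :=
        mul_le_mul_of_nonneg_left (by linarith) hm0
      rw [hRalt]
      linarith [key, hprod]
    have hB : ((e0 - hm) / R) * (k2 * ct) ≤ β := by
      have h1 : ((e0 - hm) / R) * (k2 * ct) ≤ (e0 / (e0 + KM)) * (k2 * lam) := by
        apply mul_le_mul hdiv (mul_le_mul_of_nonneg_left hclam hk2.le)
          (by positivity) (by positivity)
      have h2 : (e0 / (e0 + KM)) * (k2 * lam) = β := by rw [hβdef]; ring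
      linarith
    constructor
    · intro hu0
      rw [hut] at hu0 ⊢
      rw [hudt]
      have h1 : k1 * ((ct - hm) * (ct - hq)) ≤ -α * (ct - hm) := by
        have := mul_le_mul_of_nonneg_left hA hu0
        linarith
      linarith
    · intro hu0
      rw [hut] at hu0 ⊢
      rw [hudt]
      have h1 : -(k1 * ((ct - hm) * (ct - hq))) ≤ α * (ct - hm) := by
        have := mul_le_mul_of_nonneg_left hA (by linarith : 0 ≤ hm - ct)
        linarith
      have h2 : 0 ≤ ((e0 - hm) / R) * (k2 * ct) := by positivity
      linarith
  -- initial value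
  have hu0val : u 0 = -lam := by
    rw [hudef]
    simp only [hc0, hp0, sub_zero]
    rw [hlam]; ring
  -- the bounding function B
  set Bf : ℝ → ℝ := fun t => β / α + (lam - β / α) * Real.exp (-α * t) with hBfdef
  set Bd : ℝ → ℝ := fun t => (lam - β / α) * (Real.exp (-α * t) * (-α)) with hBddef
  have hBderiv : ∀ s : ℝ, HasDerivAt Bf (Bd s) s := by
    intro s
    have he : HasDerivAt (fun s : ℝ => Real.exp (-α * s)) (Real.exp (-α * s) * (-α)) s := by
      simpa using ((hasDerivAt_id s).const_mul (-α)).exp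
    simpa [hBfdef, hBddef] using (he.const_mul (lam - β / α)).const_add (β / α)
  clear_value Bf Bd
  have hBf0 : Bf 0 = lam := by
    rw [hBfdef]; simp only []; rw [mul_zero, Real.exp_zero]; ring
  have hBfpos : ∀ s : ℝ, β / α ≤ Bf s := by
    intro s
    rw [hBfdef]
    simp only []
    have h := mul_nonneg (show (0:ℝ) ≤ lam - β / α by linarith)
      (Real.exp_pos (-α * s)).le
    linarith
  have hBid : ∀ s : ℝ, Bd s = -α * Bf s + β := by
    intro s
    rw [hBddef, hBfdef]
    simp only []
    field_simp
    ring
  -- apply comparison on [0, T]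
  intro T hT
  have habs : ∀ ε : ℝ, 0 < ε → |u T| ≤ Bf T + ε := by
    intro ε hε
    have hucont : ContinuousOn u (Icc 0 T) := fun t ht =>
      ((hud t ht.1).continuousAt).continuousWithinAt
    have hBcont : ∀ s : ℝ, HasDerivAt (fun t => Bf t + ε) (Bd s) s := fun s =>
      (hBderiv s).add_const ε
    have hup : u T ≤ Bf T + ε := by
      apply image_le_of_deriv_right_lt_deriv_boundary hucont
        (fun t ht => (hud t ht.1).hasDerivWithinAt)
        (by rw [hu0val]; linarith [hBf0, hε, hlam_pos])
        hBcont
        (fun t ht heq => ?_) (right_mem_Icc.2 hT)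
      have hupos : 0 ≤ u t := by
        have := hBfpos t
        have := div_pos hβpos hαpos
        rw [heq]; linarith
      have h1 := (hbound t ht.1).1 hupos
      rw [hBid t]
      calc ud t ≤ -α * u t + β := h1
        _ = -α * (Bf t + ε) + β := by rw [heq]
        _ < -α * Bf t + β := by linarith [mul_pos hαpos hε]
    have hlo : -u T ≤ Bf T + ε := by
      apply image_le_of_deriv_right_lt_deriv_boundary (f := fun t => -u t)
        (f' := fun t => -ud t)
        (hucont.neg)
        (fun t ht => ((hud t ht.1).neg).hasDerivWithinAt)
        (by show -u 0 ≤ Bf 0 + ε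
            rw [hu0val]; linarith [hBf0, hε, hlam_pos])
        hBcont
        (fun t ht heq => ?_) (right_mem_Icc.2 hT)
      have heq' : -u t = Bf t + ε := heq
      have hueq : u t = -(Bf t + ε) := by linarith [heq'.le, heq'.ge]
      have huneg : u t ≤ 0 := by
        rw [hueq]; linarith [hBfpos t, div_pos hβpos hαpos]
      have h1 := (hbound t ht.1).2 huneg
      show -ud t < Bd t
      rw [hBid t]
      calc -ud t ≤ α * u t + β := h1
        _ = -α * (Bf t + ε) + β := by rw [hueq]; ring
        _ < -α * Bf t + β := by linarith [mul_pos hαpos hε]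
    have hlo' : -u T ≤ Bf T + ε := hlo
    exact abs_le.2 ⟨by linarith, hup⟩
  have habs' : |u T| ≤ Bf T := le_of_forall_pos_le_add habs
  -- final estimate
  have hfinal : Bf T ≤ lam * Real.exp (-(α * T) / 2) + β / α := by
    rw [hBfdef]
    simp only []
    clear hBfdef hBddef
    have h1 : (lam - β / α) * Real.exp (-α * T) ≤ lam * Real.exp (-α * T) := by
      apply mul_le_mul_of_nonneg_right _ (Real.exp_pos _).le
      linarith [div_pos hβpos hαpos]
    have h2 : lam * Real.exp (-α * T) ≤ lam * Real.exp (-(α * T) / 2) := by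
      apply mul_le_mul_of_nonneg_left _ hlam_pos.le
      apply Real.exp_le_exp.2
      linarith [mul_nonneg hαpos.le hT]
    linarith
  have hconst : (η * lam / ((1 + η) * (1 + κ))) * (KM / (e0 - lam + KM)) = β / α := by
    have hkm1e : km1 = k1 * KM - k2 := by linarith
    rw [hη, hκ, hβdef, hαdef, hkm1e]
    have h1 : (0:ℝ) < e0 - lam + KM := by linarith
    have h4 : (0:ℝ) < e0 + KM := by positivity
    have h2 : (1:ℝ) + e0 / KM ≠ 0 := by positivity
    have h3 : (1:ℝ) + (k1 * KM - k2) / k2 ≠ 0 := by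
      have he : (1:ℝ) + (k1 * KM - k2) / k2 = k1 * KM / k2 := by field_simp; ring
      rw [he]; positivity
    have h5 : (0:ℝ) < e0 + KM - lam := by linarith
    field_simp [h1.ne', h2, h3, h4.ne', h5.ne', hk1.ne', hk2.ne', hKMpos.ne']
    ring
  have hshow : |c T - ((e0 + KM + s0 - p T) / 2
      - Real.sqrt ((e0 + KM + s0 - p T) ^ 2 - 4 * e0 * (s0 - p T)) / 2)| = |u T| := by
    rw [hudef]
  rw [hshow, hconst]
  linarith
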